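/- Let a_⊥ satisfy u(a_⊥) = 1, and let X, X' be disjoint finite sets of items (not containing a_⊥) with w(a) > w(a_⊥) for every a ∈ X, and w(a) < w(a_⊥) for every a ∈ X'. Then f((DesW(X ∪ X'), a_⊥), u, w) ≤ f((DesW(X), a_⊥), u, w); i.e., discarding all items with weight below w(a_⊥) never decreases the optimally-ordered cascading reward. -/

import Mathlib

/-- The cascading reward function. -/
noncomputable def cascadeF {α : Type*} (u w : α → ℝ) : List α → ℝ
  | [] => 0
  | a :: t => u a * w a + (1 - u a) * cascadeF u w t

lemma cascadeF_append {α : Type*} (u w : α → ℝ) (L M : List α) :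
    cascadeF u w (L ++ M)
      = cascadeF u w L + (L.map (fun a => 1 - u a)).prod * cascadeF u w M := by
  induction L with
  | nil => simp [cascadeF]
  | cons a t ih => simp [cascadeF, ih]; ring

lemma tail_bound {α : Type*} (u w : α → ℝ) (c : ℝ)
    (hu : ∀ a, 0 ≤ u a ∧ u a ≤ 1) :
    ∀ B : List α, (∀ a ∈ B, w a ≤ c) →
      cascadeF u w B + (B.map (fun a => 1 - u a)).prod * c ≤ c := by
  intro B
  induction B with
  | nil => simp [cascadeF]
  | cons a t ih =>
    intro h
    have h1 := ih (fun b hb => h b (by simp [hb]))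
    have hu1 := (hu a).1
    have hu2 := (hu a).2
    have ha := h a (by simp)
    have h3 : u a * w a ≤ u a * c := mul_le_mul_of_nonneg_left ha hu1
    have h2 : (1 - u a) * (cascadeF u w t + (t.map (fun a => 1 - u a)).prod * c)
        ≤ (1 - u a) * c := mul_le_mul_of_nonneg_left h1 (by linarith)
    rw [mul_add] at h2
    simp only [cascadeF, List.map_cons, List.prod_cons]
    nlinarith [h2, h3]

theorem tst : True := trivial

lemma sorted_split {α : Type*} (w : α → ℝ) (c : ℝ) :
    ∀ L : List α, L.Pairwise (fun a b => w b ≤ w a) →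
      L = L.filter (fun a => decide (c < w a)) ++ L.filter (fun a => !decide (c < w a)) := by
  intro L
  induction L with
  | nil => simp
  | cons a t ih =>
    intro hs
    by_cases h : c < w a
    · rw [List.filter_cons_of_pos (by simpa using h),
        List.filter_cons_of_neg (by simpa using h)]
      simpa using ih hs.of_cons
    · have hall : ∀ b ∈ t, ¬ c < w b := fun b hb hc =>
        h (lt_of_lt_of_le hc (List.rel_of_pairwise_cons hs hb))
      have h1 : t.filter (fun a => decide (c < w a)) = [] :=
        List.filter_eq_nil_iff.mpr (fun b hb => by simpa using hall b hb)
      have h2 : t.filter (fun a => !decide (c < w a)) = t :=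
        List.filter_eq_self.mpr (fun b hb => by simpa using hall b hb)
      rw [List.filter_cons_of_neg (by simpa using h),
        List.filter_cons_of_pos (by simpa using h), h1, h2]
      simp

lemma cascadeF_cons_middle {α : Type*} (u w : α → ℝ) (a : α) :
    ∀ (s : List α) (r : List α), (∀ b ∈ s, w b = w a) →
    cascadeF u w (s ++ a :: r) = u a * w a + (1 - u a) * cascadeF u w (s ++ r) := by
  intro s
  induction s with
  | nil => intro r _; simp [cascadeF]
  | cons b t ih =>
    intro r hs
    have hb : w b = w a := hs b (by simp)
    have ht : ∀ x ∈ t, w x = w a := fun x hx => hs x (by simp [hx])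
    simp only [List.cons_append, cascadeF, List.append_eq, ih r ht, hb]
    ring

lemma cascadeF_sorted_perm {α : Type*} (u w : α → ℝ) :
    ∀ (L1 L2 : List α), L1.Perm L2 → L1.Pairwise (fun a b => w b ≤ w a) →
      L2.Pairwise (fun a b => w b ≤ w a) → cascadeF u w L1 = cascadeF u w L2 := by
  intro L1
  induction L1 with
  | nil => intro L2 h _ _; rw [h.nil_eq]
  | cons a t ih =>
    intro L2 hperm h1 h2
    have ha : a ∈ L2 := hperm.mem_iff.mp (by simp)
    obtain ⟨s, r, rfl⟩ := List.append_of_mem ha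
    have hsw : ∀ b ∈ s, w b = w a := by
      intro b hb
      have hle : w a ≤ w b := by
        have := (List.pairwise_append.mp (by simpa using h2)).2.2 b hb a (by simp)
        exact this
      have hge : w b ≤ w a := by
        have hb2 : b ∈ a :: t := hperm.mem_iff.mpr (by simp [hb])
        rcases List.mem_cons.mp hb2 with rfl | hb2
        · exact le_refl _
        · exact List.rel_of_pairwise_cons h1 hb2
      linarith
    have hperm2 : t.Perm (s ++ r) := by
      have : (a :: t).Perm (a :: (s ++ r)) := hperm.trans List.perm_middle
      exact this.cons_inv
    have hsr : (s ++ r).Pairwise (fun a b => w b ≤ w a) := by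
      refine List.Pairwise.sublist ?_ h2
      exact (List.sublist_cons_self a r).append_left s
    rw [cascadeF_cons_middle u w a s r hsw]
    simp only [cascadeF]
    rw [ih (s ++ r) hperm2 h1.of_cons hsr]

/-- Discarding all items with weight below `w(a_⊥)` never decreases the
optimally-ordered cascading reward:
`f((DesW(X ∪ X'), a_⊥), u, w) ≤ f((DesW(X), a_⊥), u, w)`, where every item of `X`
has weight above `w(a_⊥)` and every item of `X'` has weight below `w(a_⊥)`. -/
theorem discard_items_below_bot {α : Type*} [DecidableEq α] (u w : α → ℝ) (bot : α)
    (hu : ∀ a, 0 ≤ u a ∧ u a ≤ 1) (hbot : u bot = 1)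
    (X X' : Finset α) (hdisj : Disjoint X X')
    (hbX : bot ∉ X) (hbX' : bot ∉ X')
    (hwX : ∀ a ∈ X, w bot < w a) (hwX' : ∀ a ∈ X', w a < w bot)
    (LX LU : List α)
    (hLXp : LX.Perm X.toList) (hLXs : LX.Pairwise (fun a b => w b ≤ w a))
    (hLUp : LU.Perm (X ∪ X').toList) (hLUs : LU.Pairwise (fun a b => w b ≤ w a)) :
    cascadeF u w (LU ++ [bot]) ≤ cascadeF u w (LX ++ [bot]) := by
  set q : α → Bool := fun a => decide (w bot < w a) with hq
  set A := LU.filter q with hA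
  set B := LU.filter (fun a => !q a) with hB
  have hsplit : LU = A ++ B := sorted_split w (w bot) LU hLUs
  have hAs : A.Pairwise (fun a b => w b ≤ w a) := hLUs.filter _
  have hAperm : A.Perm X.toList := by
    refine (hLUp.filter q).trans ?_
    apply List.perm_of_nodup_nodup_toFinset_eq
    · exact (Finset.nodup_toList _).filter _
    · exact Finset.nodup_toList _
    · ext a
      simp only [List.toFinset_filter, List.mem_filter, List.mem_toFinset,
        Finset.mem_toList, Finset.mem_union, Finset.mem_filter, hq]
      constructor
      · rintro ⟨h1 | h1, h2⟩
        · exact h1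
        · exact absurd (of_decide_eq_true h2) (not_lt.mpr (le_of_lt (hwX' a h1)))
      · intro h1
        exact ⟨Or.inl h1, decide_eq_true (hwX a h1)⟩
  have hAeq : cascadeF u w A = cascadeF u w LX :=
    cascadeF_sorted_perm u w A LX (hAperm.trans hLXp.symm) hAs hLXs
  have hPeq : (A.map (fun a => 1 - u a)).prod = (LX.map (fun a => 1 - u a)).prod :=
    ((hAperm.trans hLXp.symm).map _).prod_eq
  have hPnonneg : 0 ≤ (A.map (fun a => 1 - u a)).prod := by
    apply List.prod_nonneg
    intro x hx
    obtain ⟨a, _, rfl⟩ := List.mem_map.mp hx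
    linarith [(hu a).2]
  have hBle : ∀ a ∈ B, w a ≤ w bot := by
    intro a ha
    have := (List.mem_filter.mp ha).2
    simp only [hq, Bool.not_eq_true', decide_eq_false_iff_not, not_lt] at this
    exact this
  have hbotval : cascadeF u w [bot] = w bot := by simp [cascadeF, hbot]
  have hBbound : cascadeF u w (B ++ [bot]) ≤ w bot := by
    rw [cascadeF_append, hbotval]
    exact tail_bound u w (w bot) hu B hBle
  calc cascadeF u w (LU ++ [bot]) = cascadeF u w (A ++ (B ++ [bot])) := by
        rw [hsplit, List.append_assoc]
    _ = cascadeF u w A + (A.map (fun a => 1 - u a)).prod * cascadeF u w (B ++ [bot]) :=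
        cascadeF_append u w A _
    _ ≤ cascadeF u w A + (A.map (fun a => 1 - u a)).prod * w bot := by
        gcongr
    _ = cascadeF u w LX + (LX.map (fun a => 1 - u a)).prod * cascadeF u w [bot] := by
        rw [hAeq, hPeq, hbotval]
    _ = cascadeF u w (LX ++ [bot]) := (cascadeF_append u w LX _).symm
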